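/- Let k ≥ 2 and m = 2k + 1. Let f : 𝔽₂^{2k} → 𝔽₂ be a bent function, i.e., its Walsh–Hadamard transform f̂(a) = Σ_{x ∈ 𝔽₂^{2k}} (−1)^{f(x) + a·x} satisfies f̂(a) ∈ {2^k, −2^k} for every a ∈ 𝔽₂^{2k}, and suppose f(1,1,…,1) = 1. Let S = supp(f) ⊆ 𝔽₂^{2k} and S' = {(ε, z) ∈ 𝔽₂^m : ε ∈ 𝔽₂, z ∈ S} (identifying 𝔽₂^m with 𝔽₂ × 𝔽₂^{2k}). Set a = (0,0,…,0), b = (1,1,…,1), c = (1,0,…,0), d = (0,1,…,1) in 𝔽₂^m. Then the cubelike graph Γ = Cay(𝔽₂^m, S') has PEST from the edge (a,b) to the edge (c,d) at time π/2^k. -/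

import Mathlib

set_option maxHeartbeats 1600000


open Matrix Finset

noncomputable section

/-- The adjacency matrix of the Cayley (cubelike) graph `Cay(G, S)`. -/
def adjMatrix {G : Type*} [AddCommGroup G] [Fintype G] [DecidableEq G]
    (S : Finset G) : Matrix G G ℂ :=
  fun u v => if u + v ∈ S then 1 else 0

/-- The transfer matrix `H(t) = exp(i t A)`. -/
def transferMatrix {G : Type*} [AddCommGroup G] [Fintype G] [DecidableEq G]
    (S : Finset G) (t : ℝ) : Matrix G G ℂ :=
  NormedSpace.exp (Complex.I • ((t : ℂ) • adjMatrix S))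

/-- The standard basis vector `e_a` of `ℂ^V`. -/
def stdBasis {G : Type*} [DecidableEq G] (a : G) : G → ℂ :=
  fun v => if v = a then 1 else 0

/-- Perfect edge state transfer from the edge `(a,b)` to the edge `(c,d)` at time `t`:
`|(1/2)(e_c - e_d)ᵀ H(t)(e_a - e_b)|² = 1`. -/
def hasPEST {G : Type*} [AddCommGroup G] [Fintype G] [DecidableEq G]
    (S : Finset G) (a b c d : G) (t : ℝ) : Prop :=
  ‖(1 / 2 : ℂ) * dotProduct (stdBasis c - stdBasis d)
      (transferMatrix S t *ᵥ (stdBasis a - stdBasis b))‖ ^ 2 = 1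

/-- The eigenvalue `λ_x = ∑_{s ∈ S} (-1)^{x·s}` of a cubelike graph. -/
def lam {m : ℕ} (S : Finset (Fin m → ZMod 2)) (x : Fin m → ZMod 2) : ℤ :=
  ∑ s ∈ S, (-1) ^ (x ⬝ᵥ s).val

/-- The Walsh–Hadamard transform of a Boolean function `f : 𝔽₂^n → 𝔽₂`. -/
def walsh {n : ℕ} (f : (Fin n → ZMod 2) → ZMod 2) (x : Fin n → ZMod 2) : ℤ :=
  ∑ y : Fin n → ZMod 2, (-1) ^ (f y + x ⬝ᵥ y).val

lemma chi_add (a b : ZMod 2) : ((-1:ℂ))^(a+b).val = (-1)^a.val * (-1)^b.val := by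
  rcases (show a = 0 ∨ a = 1 by revert a; decide) with rfl | rfl <;> rcases (show b = 0 ∨ b = 1 by revert b; decide) with rfl | rfl <;> norm_num [show ZMod.val (2:ZMod 2) = 0 by decide, show ZMod.val (0 : ZMod 2) = 0 from rfl, show ZMod.val (1 : ZMod 2) = 1 from rfl]

lemma chi_mul_self (a : ZMod 2) : ((-1:ℂ))^a.val * (-1)^a.val = 1 := by
  rcases (show a = 0 ∨ a = 1 by revert a; decide) with rfl | rfl <;> norm_num [show ZMod.val (0 : ZMod 2) = 0 from rfl, show ZMod.val (1 : ZMod 2) = 1 from rfl]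

lemma addself {n : ℕ} (x : Fin n → ZMod 2) : x + x = 0 := by
  funext i
  have : ∀ a : ZMod 2, a + a = 0 := by decide
  exact this (x i)

lemma addcancel {n : ℕ} (x y : Fin n → ZMod 2) : x + y = 0 ↔ x = y := by
  constructor
  · intro h
    funext i
    have hi := congrFun h i
    have : ∀ a b : ZMod 2, a + b = 0 → a = b := by decide
    exact this _ _ hi
  · rintro rfl; exact addself x

lemma aux_iff {n : ℕ} (z z' u : Fin n → ZMod 2) : z + z' + u = 0 ↔ z' = z + u := by
  rw [show z + z' + u = (z + u) + z' by abel, addcancel, eq_comm]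

lemma card_V (n : ℕ) : Fintype.card (Fin n → ZMod 2) = 2^n := by
  simp [Fintype.card_fun]

lemma sum_chi {n : ℕ} (w : Fin n → ZMod 2) :
    ∑ y : Fin n → ZMod 2, ((-1:ℂ))^((y ⬝ᵥ w).val) = if w = 0 then (2:ℂ)^n else 0 := by
  split_ifs with h
  · subst h
    simp only [dotProduct_zero, ZMod.val_zero, pow_zero]
    rw [Finset.sum_const, Finset.card_univ, card_V]
    simp
  · obtain ⟨i, hi⟩ : ∃ i, w i ≠ 0 := by
      by_contra hc
      push_neg at hc
      exact h (funext hc)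
    have hwi : w i = 1 := by
      have : ∀ a : ZMod 2, a ≠ 0 → a = 1 := by decide
      exact this _ hi
    have key : ∀ y : Fin n → ZMod 2,
        ((-1:ℂ))^(((y + Pi.single i 1) ⬝ᵥ w).val) = -((-1:ℂ))^((y ⬝ᵥ w).val) := by
      intro y
      rw [add_dotProduct, chi_add, single_dotProduct, hwi, mul_one, show ZMod.val (1 : ZMod 2) = 1 from rfl]
      ring
    have hinv : ∑ y : Fin n → ZMod 2, ((-1:ℂ))^((y ⬝ᵥ w).val)
        = ∑ y : Fin n → ZMod 2, ((-1:ℂ))^(((y + Pi.single i 1) ⬝ᵥ w).val) :=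
      (Fintype.sum_equiv (Equiv.addRight (Pi.single i 1)) _ _ (fun y => rfl)).symm
    have h2 : -∑ y : Fin n → ZMod 2, ((-1:ℂ))^((y ⬝ᵥ w).val)
        = ∑ y : Fin n → ZMod 2, ((-1:ℂ))^((y ⬝ᵥ w).val) := by
      conv_rhs => rw [hinv]
      rw [Finset.sum_congr rfl (fun y _ => key y), Finset.sum_neg_distrib]
    exact (neg_eq_self.mp h2).symm ▸ rfl

lemma walsh_cast {n : ℕ} (f : (Fin n → ZMod 2) → ZMod 2) (x : Fin n → ZMod 2) :
    ((walsh f x : ℤ) : ℂ) = ∑ y : Fin n → ZMod 2, ((-1:ℂ))^((f y + x ⬝ᵥ y).val) := by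
  unfold walsh
  push_cast
  rfl

lemma autocorr {n : ℕ} (f : (Fin n → ZMod 2) → ZMod 2)
    (hsq : ∀ y, ((walsh f y : ℤ) : ℂ)^2 = (2:ℂ)^n) (u : Fin n → ZMod 2) :
    ∑ z : Fin n → ZMod 2, ((-1:ℂ))^((f (u+z)).val) * ((-1:ℂ))^((f z).val)
      = if u = 0 then (2:ℂ)^n else 0 := by
  split_ifs with h
  · subst h
    have : ∀ z : Fin n → ZMod 2,
        ((-1:ℂ))^((f (0+z)).val) * ((-1:ℂ))^((f z).val) = 1 := by
      intro z; rw [zero_add]; exact chi_mul_self _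
    rw [Finset.sum_congr rfl (fun z _ => this z), Finset.sum_const, Finset.card_univ, card_V]
    simp
  · -- T = ∑_y walsh² χ(y·u)
    have key : ∀ y : Fin n → ZMod 2, ((walsh f y : ℤ) : ℂ)^2 * ((-1:ℂ))^((y ⬝ᵥ u).val)
        = ∑ z : Fin n → ZMod 2, ∑ z' : Fin n → ZMod 2,
            (((-1:ℂ))^((f z).val) * ((-1:ℂ))^((f z').val)) * ((-1:ℂ))^((y ⬝ᵥ (z + z' + u)).val) := by
      intro y
      rw [walsh_cast, sq, Finset.sum_mul_sum, Finset.sum_mul]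
      refine Finset.sum_congr rfl fun z _ => ?_
      rw [Finset.sum_mul]
      refine Finset.sum_congr rfl fun z' _ => ?_
      rw [chi_add, chi_add, dotProduct_add, dotProduct_add, chi_add, chi_add, dotProduct_comm y z,
        dotProduct_comm y z', dotProduct_comm y u]
      ring_nf
    have hT1 : ∑ y : Fin n → ZMod 2, ((walsh f y : ℤ) : ℂ)^2 * ((-1:ℂ))^((y ⬝ᵥ u).val) = 0 := by
      rw [Finset.sum_congr rfl (fun y _ => by rw [hsq y]), ← Finset.mul_sum, sum_chi, if_neg h,
        mul_zero]
    have hT2 : ∑ y : Fin n → ZMod 2, ((walsh f y : ℤ) : ℂ)^2 * ((-1:ℂ))^((y ⬝ᵥ u).val)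
        = (2:ℂ)^n * ∑ z : Fin n → ZMod 2, ((-1:ℂ))^((f (u+z)).val) * ((-1:ℂ))^((f z).val) := by
      rw [Finset.sum_congr rfl (fun y _ => key y), Finset.sum_comm]
      rw [Finset.sum_congr rfl (fun z _ => Finset.sum_comm)]
      have inner : ∀ z : Fin n → ZMod 2,
          ∑ z' : Fin n → ZMod 2, ∑ y : Fin n → ZMod 2,
            (((-1:ℂ))^((f z).val) * ((-1:ℂ))^((f z').val)) * ((-1:ℂ))^((y ⬝ᵥ (z + z' + u)).val)
          = ((-1:ℂ))^((f z).val) * ((-1:ℂ))^((f (z+u)).val) * (2:ℂ)^n := by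
        intro z
        have : ∀ z' : Fin n → ZMod 2,
            ∑ y : Fin n → ZMod 2,
              (((-1:ℂ))^((f z).val) * ((-1:ℂ))^((f z').val)) * ((-1:ℂ))^((y ⬝ᵥ (z + z' + u)).val)
            = if z' = z + u then (((-1:ℂ))^((f z).val) * ((-1:ℂ))^((f z').val)) * (2:ℂ)^n else 0 := by
          intro z'
          rw [← Finset.mul_sum, sum_chi, mul_ite, mul_zero,
            if_congr (aux_iff z z' u) rfl rfl]
        rw [Finset.sum_congr rfl (fun z' _ => this z')]
        rw [Finset.sum_ite_eq' Finset.univ (z + u)]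
        simp
      rw [Finset.sum_congr rfl (fun z _ => inner z), Finset.mul_sum]
      refine Finset.sum_congr rfl fun z _ => ?_
      rw [add_comm u z]
      ring
    have := hT1.symm.trans hT2
    have h2n : (2:ℂ)^n ≠ 0 := pow_ne_zero _ two_ne_zero
    rcases mul_eq_zero.mp this.symm with hc | hc
    · exact absurd hc h2n
    · exact hc

lemma ind_eq (a : ZMod 2) : (if a = 1 then (1:ℂ) else 0) = (1 - (-1)^a.val)/2 := by
  rcases (show a = 0 ∨ a = 1 by revert a; decide) with rfl | rfl <;>
    norm_num [show ZMod.val (0 : ZMod 2) = 0 from rfl, show ZMod.val (1 : ZMod 2) = 1 from rfl]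

lemma core {n : ℕ} (f : (Fin n → ZMod 2) → ZMod 2)
    (hsq : ∀ y, ((walsh f y : ℤ) : ℂ)^2 = (2:ℂ)^n) (z₀ : Fin n → ZMod 2) :
    4 * ∑ z : Fin n → ZMod 2, (if f (z₀+z) = 1 then (1:ℂ) else 0) *
        ((if f z = 1 then (1:ℂ) else 0) - (if f (z+(fun _ => 1)) = 1 then (1:ℂ) else 0))
      = (2:ℂ)^n * ((if z₀ = 0 then (1:ℂ) else 0) - (if z₀ = (fun _ => 1) then (1:ℂ) else 0)) := by
  set one : Fin n → ZMod 2 := (fun _ => 1) with hone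
  have expand : ∀ z : Fin n → ZMod 2,
      (if f (z₀+z) = 1 then (1:ℂ) else 0) *
        ((if f z = 1 then (1:ℂ) else 0) - (if f (z+one) = 1 then (1:ℂ) else 0))
      = (((-1:ℂ))^((f (z+one)).val) - ((-1:ℂ))^((f z).val)
          - ((-1:ℂ))^((f (z₀+z)).val) * ((-1:ℂ))^((f (z+one)).val)
          + ((-1:ℂ))^((f (z₀+z)).val) * ((-1:ℂ))^((f z).val))/4 := by
    intro z
    rw [ind_eq, ind_eq, ind_eq]
    ring
  have h11 : ∀ w : Fin n → ZMod 2, w + one + one = w := fun w => by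
    rw [add_assoc, addself, add_zero]
  have hre1 : ∑ z : Fin n → ZMod 2, ((-1:ℂ))^((f (z+one)).val)
      = ∑ z : Fin n → ZMod 2, ((-1:ℂ))^((f z).val) :=
    Fintype.sum_equiv (Equiv.addRight one) _ _ (fun z => rfl)
  have hre3 : ∑ z : Fin n → ZMod 2, ((-1:ℂ))^((f (z₀+z)).val) * ((-1:ℂ))^((f (z+one)).val)
      = ∑ w : Fin n → ZMod 2, ((-1:ℂ))^((f ((z₀+one)+w)).val) * ((-1:ℂ))^((f w).val) := by
    refine (Fintype.sum_equiv (Equiv.addRight one) _ _ (fun w => ?_)).symm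
    simp only [Equiv.coe_addRight]
    rw [h11 w, show z₀ + (w + one) = (z₀ + one) + w by abel]
  have C3 := autocorr f hsq (z₀ + one)
  have C4 := autocorr f hsq z₀
  rw [Finset.sum_congr rfl (fun z _ => expand z), ← Finset.sum_div, Finset.sum_add_distrib,
    Finset.sum_sub_distrib, Finset.sum_sub_distrib, hre1, hre3, C3, C4,
    if_congr (addcancel z₀ one) rfl rfl]
  split_ifs <;> ring

lemma exp_mulVec_eigen {n : Type*} [Fintype n] [DecidableEq n] (M : Matrix n n ℂ)
    (x : n → ℂ) (μ : ℂ) (h : M *ᵥ x = μ • x) :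
    NormedSpace.exp M *ᵥ x = Complex.exp μ • x := by
  have hpow : ∀ m : ℕ, (M ^ m) *ᵥ x = (μ ^ m) • x := by
    intro m
    induction m with
    | zero => simp
    | succ m ih =>
      rw [pow_succ, ← mulVec_mulVec, h, mulVec_smul, ih, smul_smul, ← pow_succ']
  let L : Matrix n n ℂ →ₗ[ℂ] (n → ℂ) :=
    { toFun := fun A => A *ᵥ x
      map_add' := fun A B => add_mulVec A B x
      map_smul' := fun c A => smul_mulVec c A x }
  have h2 : HasSum (fun m : ℕ => ((Nat.factorial m : ℂ)⁻¹ * μ ^ m) • x)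
      (NormedSpace.exp M *ᵥ x) := by
    letI : SeminormedRing (Matrix n n ℂ) := Matrix.linftyOpSemiNormedRing
    letI : NormedRing (Matrix n n ℂ) := Matrix.linftyOpNormedRing
    letI : NormedAlgebra ℂ (Matrix n n ℂ) := Matrix.linftyOpNormedAlgebra
    have hL : Continuous L := L.continuous_of_finiteDimensional
    have h1 : HasSum (fun m : ℕ => (Nat.factorial m : ℂ)⁻¹ • M ^ m) (NormedSpace.exp M) :=
      NormedSpace.exp_series_hasSum_exp' M
    have h2 := h1.map L.toAddMonoidHom hL
    have hfun : (fun m : ℕ => L ((Nat.factorial m : ℂ)⁻¹ • M ^ m))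
        = fun m : ℕ => ((Nat.factorial m : ℂ)⁻¹ * μ ^ m) • x := by
      funext m
      show ((Nat.factorial m : ℂ)⁻¹ • M ^ m) *ᵥ x = _
      rw [smul_mulVec, hpow, smul_smul]
    simp only [Function.comp_def, LinearMap.toAddMonoidHom_coe] at h2; rw [hfun] at h2
    exact h2
  have h3 : HasSum (fun m : ℕ => ((Nat.factorial m : ℂ)⁻¹ * μ ^ m) • x)
      (Complex.exp μ • x) := by
    have := (NormedSpace.exp_series_hasSum_exp' (𝕂 := ℂ) μ).smul_const x
    simpa [smul_eq_mul, Complex.exp_eq_exp_ℂ] using this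
  exact h2.unique h3

/-- Lifting a bent function `f` on `𝔽₂^{2k}` with `f(1,…,1) = 1` to the connection set
`S' = 𝔽₂ × supp(f)` of a cubelike graph on `𝔽₂^{2k+1} ≃ 𝔽₂ × 𝔽₂^{2k}` yields PEST
from `((0,0…0),(1,1…1))` to `((1,0…0),(0,1…1))` at time `π/2^k` (Theorem 4). -/
theorem hasPEST_of_bent {k : ℕ} (hk : 2 ≤ k)
    (f : (Fin (2 * k) → ZMod 2) → ZMod 2)
    (hbent : ∀ a : Fin (2 * k) → ZMod 2, walsh f a = 2 ^ k ∨ walsh f a = -2 ^ k)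
    (h1 : f (fun _ => 1) = 1)
    (S : Finset (Fin (2 * k) → ZMod 2)) (hS : S = univ.filter (fun y => f y = 1))
    (S' : Finset (ZMod 2 × (Fin (2 * k) → ZMod 2)))
    (hS' : S' = (univ : Finset (ZMod 2)) ×ˢ S) :
    hasPEST S' ((0 : ZMod 2), (0 : Fin (2 * k) → ZMod 2))
      ((1 : ZMod 2), (fun _ => 1 : Fin (2 * k) → ZMod 2))
      ((1 : ZMod 2), (0 : Fin (2 * k) → ZMod 2))
      ((0 : ZMod 2), (fun _ => 1 : Fin (2 * k) → ZMod 2))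
      (Real.pi / 2 ^ k) := by
  classical
  set one : Fin (2 * k) → ZMod 2 := (fun _ => 1) with hone
  set a : ZMod 2 × (Fin (2 * k) → ZMod 2) := ((0 : ZMod 2), (0 : Fin (2 * k) → ZMod 2)) with ha
  set b : ZMod 2 × (Fin (2 * k) → ZMod 2) := ((1 : ZMod 2), one) with hb
  set c : ZMod 2 × (Fin (2 * k) → ZMod 2) := ((1 : ZMod 2), (0 : Fin (2 * k) → ZMod 2)) with hc
  set d : ZMod 2 × (Fin (2 * k) → ZMod 2) := ((0 : ZMod 2), one) with hd
  set t : ℝ := Real.pi / 2 ^ k with ht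
  set A : Matrix (ZMod 2 × (Fin (2 * k) → ZMod 2)) (ZMod 2 × (Fin (2 * k) → ZMod 2)) ℂ :=
    _root_.adjMatrix S' with hA_def
  -- walsh squares
  have hsq : ∀ y, ((walsh f y : ℤ) : ℂ)^2 = (2:ℂ)^(2*k) := by
    intro y
    have h2 : ((2:ℂ)^k)^2 = (2:ℂ)^(2*k) := by rw [← pow_mul, mul_comm]
    rcases hbent y with h | h <;> rw [h] <;> push_cast <;> rw [← h2] <;> ring
  have hmem : ∀ w : ZMod 2 × (Fin (2 * k) → ZMod 2), w ∈ S' ↔ w.2 ∈ S := by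
    subst hS'; intro w; simp [Finset.mem_product]
  have hfS : ∀ z, z ∈ S ↔ f z = 1 := by subst hS; intro z; simp
  have hAapp : ∀ w x : ZMod 2 × (Fin (2 * k) → ZMod 2),
      A w x = if f (w.2 + x.2) = 1 then (1:ℂ) else 0 := by
    intro w x
    show (if w + x ∈ S' then (1:ℂ) else 0) = _
    exact if_congr ((hmem (w+x)).trans (hfS _)) rfl rfl
  have hstd : ∀ x : ZMod 2 × (Fin (2 * k) → ZMod 2), _root_.stdBasis x = Pi.single x (1:ℂ) := by
    intro x; funext v
    show (if v = x then (1:ℂ) else 0) = _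
    rw [Pi.single_apply]
  have hmv : ∀ x : ZMod 2 × (Fin (2 * k) → ZMod 2),
      A *ᵥ _root_.stdBasis x = fun w => A w x := by
    intro x; rw [hstd, mulVec_single_one]; funext w; rfl
  -- the relevant vectors
  set u : (ZMod 2 × (Fin (2 * k) → ZMod 2)) → ℂ := stdBasis a - stdBasis b with hu
  set v2 : (ZMod 2 × (Fin (2 * k) → ZMod 2)) → ℂ := stdBasis d - stdBasis c with hv2
  set p : (ZMod 2 × (Fin (2 * k) → ZMod 2)) → ℂ := u - v2 with hp
  set s : (ZMod 2 × (Fin (2 * k) → ZMod 2)) → ℂ := u + v2 with hs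
  set g : (ZMod 2 × (Fin (2 * k) → ZMod 2)) → ℂ :=
    fun w => 2*((if f w.2 = 1 then (1:ℂ) else 0) - (if f (w.2 + one) = 1 then (1:ℂ) else 0))
    with hg
  have hAs : A *ᵥ s = 0 := by
    rw [hs, hu, hv2, mulVec_add, mulVec_sub, mulVec_sub, hmv, hmv, hmv, hmv]
    funext w
    simp only [Pi.add_apply, Pi.sub_apply, Pi.zero_apply, hAapp, ha, hb, hc, hd, add_zero]
    ring
  have hAp : A *ᵥ p = g := by
    rw [hp, hu, hv2, mulVec_sub, mulVec_sub, mulVec_sub, hmv, hmv, hmv, hmv]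
    funext w
    simp only [Pi.sub_apply, hAapp, ha, hb, hc, hd, add_zero, hg]
    ring
  have hpw : ∀ w : ZMod 2 × (Fin (2 * k) → ZMod 2),
      p w = (if w.2 = 0 then (1:ℂ) else 0) - (if w.2 = one then (1:ℂ) else 0) := by
    intro w
    obtain ⟨δ, z⟩ := w
    have h01 : (0 : ZMod 2) ≠ 1 := by decide
    have h10 : (1 : ZMod 2) ≠ 0 := by decide
    rw [hp, hu, hv2]
    simp only [Pi.sub_apply]
    show (if (δ, z) = a then (1:ℂ) else 0) - (if (δ, z) = b then (1:ℂ) else 0) -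
        ((if (δ, z) = d then (1:ℂ) else 0) - (if (δ, z) = c then (1:ℂ) else 0)) = _
    rw [ha, hb, hc, hd]
    have hδ : δ = 0 ∨ δ = 1 := by revert δ; decide
    rcases hδ with rfl | rfl <;>
      simp only [Prod.mk.injEq, h01, h10, false_and, if_false, true_and] <;> ring
  have hAg : A *ᵥ g = ((2:ℂ)^(2*k)) • p := by
    funext w
    show ∑ x : ZMod 2 × (Fin (2 * k) → ZMod 2), A w x * g x = _
    calc ∑ x : ZMod 2 × (Fin (2 * k) → ZMod 2), A w x * g x
        = ∑ δ : ZMod 2, ∑ z : Fin (2 * k) → ZMod 2,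
            (if f (w.2 + z) = 1 then (1:ℂ) else 0) *
              (2*((if f z = 1 then (1:ℂ) else 0) - (if f (z + one) = 1 then (1:ℂ) else 0))) := by
          rw [Fintype.sum_prod_type]
          exact Finset.sum_congr rfl fun δ _ => Finset.sum_congr rfl fun z _ => by
            rw [hAapp]
      _ = 2 * ∑ z : Fin (2 * k) → ZMod 2,
            (if f (w.2 + z) = 1 then (1:ℂ) else 0) *
              (2*((if f z = 1 then (1:ℂ) else 0) - (if f (z + one) = 1 then (1:ℂ) else 0))) := by
          rw [Finset.sum_const, Finset.card_univ]
          norm_num [ZMod.card]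
      _ = 4 * ∑ z : Fin (2 * k) → ZMod 2,
            (if f (w.2 + z) = 1 then (1:ℂ) else 0) *
              ((if f z = 1 then (1:ℂ) else 0) - (if f (z + one) = 1 then (1:ℂ) else 0)) := by
          rw [Finset.mul_sum, Finset.mul_sum]
          refine Finset.sum_congr rfl fun z _ => by ring
      _ = (2:ℂ)^(2*k) * ((if w.2 = 0 then (1:ℂ) else 0) - (if w.2 = one then (1:ℂ) else 0)) := by
          rw [hone]
          exact core f hsq w.2
      _ = ((2:ℂ)^(2*k) • p) w := by rw [Pi.smul_apply, hpw w, smul_eq_mul]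
  -- eigen decomposition
  have hM : ∀ (x : (ZMod 2 × (Fin (2 * k) → ZMod 2)) → ℂ) (μ : ℂ), A *ᵥ x = μ • x →
      transferMatrix S' t *ᵥ x = Complex.exp (Complex.I * ((t:ℝ):ℂ) * μ) • x := by
    intro x μ hx
    have hMx : (Complex.I • (((t:ℝ):ℂ) • A)) *ᵥ x = (Complex.I * ((t:ℝ):ℂ) * μ) • x := by
      rw [smul_mulVec, smul_mulVec, hx, smul_smul, smul_smul, mul_assoc]
    exact exp_mulVec_eigen _ x _ hMx
  have hHs : transferMatrix S' t *ᵥ s = s := by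
    have := hM s 0 (by rw [hAs, zero_smul])
    simpa using this
  have hpk : ((t:ℝ):ℂ) * (2:ℂ)^k = (Real.pi:ℂ) := by
    have hne : (2:ℂ)^k ≠ 0 := pow_ne_zero _ two_ne_zero
    rw [ht]
    push_cast
    field_simp
  have e1 : Complex.exp (Complex.I * ((t:ℝ):ℂ) * (2:ℂ)^k) = -1 := by
    rw [mul_assoc, hpk, mul_comm, Complex.exp_pi_mul_I]
  have e2 : Complex.exp (Complex.I * ((t:ℝ):ℂ) * (-(2:ℂ)^k)) = -1 := by
    have heq : Complex.I * ((t:ℝ):ℂ) * (-(2:ℂ)^k) = -((Real.pi:ℂ) * Complex.I) := by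
      rw [mul_neg, mul_assoc, hpk, mul_comm]
    rw [heq, Complex.exp_neg, Complex.exp_pi_mul_I]
    norm_num
  set rp : (ZMod 2 × (Fin (2 * k) → ZMod 2)) → ℂ := (2:ℂ)^k • p + g with hrp
  set rm : (ZMod 2 × (Fin (2 * k) → ZMod 2)) → ℂ := (2:ℂ)^k • p - g with hrm
  have hpow2 : (2:ℂ)^(2*k) = (2:ℂ)^k * (2:ℂ)^k := by rw [← pow_add, two_mul]
  have hArp : A *ᵥ rp = ((2:ℂ)^k) • rp := by
    rw [hrp, mulVec_add, mulVec_smul, hAp, hAg, hpow2]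
    module
  have hArm : A *ᵥ rm = (-(2:ℂ)^k) • rm := by
    rw [hrm, mulVec_sub, mulVec_smul, hAp, hAg, hpow2]
    module
  have hHrp := hM rp _ hArp
  have hHrm := hM rm _ hArm
  rw [e1] at hHrp
  rw [e2] at hHrm
  have hsum : rp + rm = ((2:ℂ) * 2^k) • p := by rw [hrp, hrm]; module
  have hne2k : ((2:ℂ) * 2^k) ≠ 0 := mul_ne_zero two_ne_zero (pow_ne_zero _ two_ne_zero)
  have hHp : transferMatrix S' t *ᵥ p = -p := by
    have h2 : ((2:ℂ)*2^k) • (transferMatrix S' t *ᵥ p) = ((2:ℂ)*2^k) • (-p) := by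
      rw [← mulVec_smul, ← hsum, mulVec_add, hHrp, hHrm, hrp, hrm]
      module
    exact smul_right_injective _ hne2k h2
  have h2u : (2:ℂ) • u = s + p := by rw [hs, hp]; module
  have h2v : s - p = (2:ℂ) • v2 := by rw [hs, hp]; module
  have hHu : transferMatrix S' t *ᵥ u = v2 := by
    have h2 : (2:ℂ) • (transferMatrix S' t *ᵥ u) = (2:ℂ) • v2 := by
      rw [← mulVec_smul, h2u, mulVec_add, hHs, hHp, ← sub_eq_add_neg, h2v]
    exact smul_right_injective _ two_ne_zero h2
  have hdot : ∀ x y : ZMod 2 × (Fin (2 * k) → ZMod 2),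
      dotProduct (_root_.stdBasis x) (_root_.stdBasis y) = if x = y then (1:ℂ) else 0 := by
    intro x y
    rw [hstd, hstd, dotProduct_single, mul_one, Pi.single_apply]
    exact if_congr eq_comm rfl rfl
  have hcd : c ≠ d := by
    rw [hc, hd]
    intro hcon
    have h10 : (1:ZMod 2) = 0 := congrArg Prod.fst hcon
    exact absurd h10 (by decide)
  have hdc : d ≠ c := Ne.symm hcd
  unfold hasPEST
  rw [← hu, hHu, hv2, sub_dotProduct, dotProduct_sub, dotProduct_sub,
    hdot, hdot, hdot, hdot, if_neg hcd, if_pos rfl, if_pos rfl, if_neg hdc]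
  norm_num

end
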